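/- Suppose κ is a regular uncountable cardinal, κ ≤ λ, and cf(λ) ≥ κ. Then every club of [λ]^{<κ} contains an unbounded subset which is not stationary. -/

import Mathlib

open Cardinal Set

noncomputable section

/-- A finitary function on the ordinals: an arity `n` together with an
`n`-ary function on ordinals. -/
abbrev FinFun := Σ n : ℕ, (Fin n → Ordinal.{0}) → Ordinal.{0}

/-- `[λ]^{<κ}`: the collection of subsets of `λ` (viewed as the set of
ordinals `< λ`) of cardinality `< κ`. -/
def smallSubsets (lam kap : Cardinal.{0}) : Set (Set Ordinal.{0}) :=
  {a | (∀ x ∈ a, x < lam.ord) ∧ Cardinal.mk ↥a < Cardinal.lift.{1} kap}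

/-- The countable family `F` consists of finitary functions *on `λ`*. -/
def FamOn (lam : Cardinal.{0}) (F : Set FinFun) : Prop :=
  ∀ f ∈ F, ∀ x : Fin f.1 → Ordinal.{0}, (∀ i, x i < lam.ord) → f.2 x < lam.ord

/-- The club `C_F` of `[λ]^{<κ}` associated to a family `F` of finitary
functions on `λ`: the members `a` of `[λ]^{<κ}` closed under every function
of `F` and such that `a ∩ κ` is an ordinal (an initial segment of `κ`). -/
def clubOf (lam kap : Cardinal.{0}) (F : Set FinFun) : Set (Set Ordinal.{0}) :=
  {a | a ∈ smallSubsets lam kap ∧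
    (∀ f ∈ F, ∀ x : Fin f.1 → Ordinal.{0}, (∀ i, x i ∈ a) → f.2 x ∈ a) ∧
    ∃ β < kap.ord, a ∩ Set.Iio kap.ord = Set.Iio β}

/-- `C` is a club of `[λ]^{<κ}`. -/
def IsClubPK (lam kap : Cardinal.{0}) (C : Set (Set Ordinal.{0})) : Prop :=
  ∃ F : Set FinFun, F.Countable ∧ FamOn lam F ∧ C = clubOf lam kap F

/-- `S` is a stationary subset of `[λ]^{<κ}`: it meets every club. -/
def IsStationaryPK (lam kap : Cardinal.{0}) (S : Set (Set Ordinal.{0})) : Prop :=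
  ∀ C, IsClubPK lam kap C → (S ∩ C).Nonempty

/-- `S` is an unbounded subset of `[λ]^{<κ}`: every member of `[λ]^{<κ}`
is contained in some member of `S`. -/
def IsUnbounded (lam kap : Cardinal.{0}) (S : Set (Set Ordinal.{0})) : Prop :=
  ∀ b ∈ smallSubsets lam kap, ∃ a ∈ S, b ⊆ a

/-- The club filter `E_{λ,κ}`: the filter generated by the clubs of
`[λ]^{<κ}`. -/
def clubFilter (lam kap : Cardinal.{0}) : Filter (Set Ordinal.{0}) :=
  Filter.generate {C | IsClubPK lam kap C}

namespace ClubAux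


/-- sup of a set of ordinals, each `< c`, of size `< cof c`, is `< c`. -/
lemma sSup_lt_ord' {s : Set Ordinal.{0}} {c : Ordinal.{0}}
    (hc : ∀ x ∈ s, x < c) (hs : #s < Cardinal.lift.{1} c.cof) : sSup s < c := by
  rcases Set.eq_empty_or_nonempty s with rfl | hne
  · have hc0 : c ≠ 0 := by
      rintro rfl
      simp [Ordinal.cof_zero, Cardinal.mk_emptyCollection] at hs
    rw [csSup_empty]
    exact pos_iff_ne_zero.2 hc0
  · haveI h1 : Small.{0} ↥(Set.Iio c) := Ordinal.small_Iio c
    haveI : Small.{0} ↥s := @small_subset _ (Set.Iio c) s (fun x hx => hc x hx) h1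
    have hrange : Set.range (fun i : Shrink.{0} ↥s =>
        (((equivShrink ↥s).symm i : ↥s) : Ordinal)) = s := by
      ext z
      constructor
      · rintro ⟨i, rfl⟩; exact (((equivShrink ↥s).symm i)).2
      · intro hz; exact ⟨equivShrink ↥s ⟨z, hz⟩, by simp⟩
    have hcard : #(Shrink.{0} ↥s) < c.cof := by
      have := lift_mk_shrink''.{1, 0} ↥s
      refine Cardinal.lift_lt.{0,1}.1 ?_
      rw [this]; exact hs
    have := Ordinal.iSup_lt_ord (f := fun i : Shrink.{0} ↥s =>
        (((equivShrink ↥s).symm i : ↥s) : Ordinal)) hcard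
      (fun i => hc _ ((equivShrink ↥s).symm i).2)
    rwa [iSup, hrange] at this


variable (F : Set FinFun) (kap : Cardinal.{0})

/-- the fill bound: sup of x+1 over x in X below kap.ord -/
def fillB (X : Set Ordinal.{0}) : Ordinal.{0} :=
  sSup ((fun x => x + 1) '' (X ∩ Iio kap.ord))

def istep (X : Set Ordinal.{0}) : Set Ordinal.{0} :=
  ⋃ f ∈ F, (f.2 '' {x : Fin f.1 → Ordinal.{0} | ∀ i, x i ∈ X})

def stepF (X : Set Ordinal.{0}) : Set Ordinal.{0} :=
  (X ∪ istep F X) ∪ Iio (fillB kap X)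

def clN (X : Set Ordinal.{0}) : ℕ → Set Ordinal.{0}
  | 0 => X
  | n + 1 => stepF F kap (clN X n)

def clF (X : Set Ordinal.{0}) : Set Ordinal.{0} := ⋃ n, clN F kap X n

variable {F kap}

lemma fillB_set_bdd (X : Set Ordinal.{0}) :
    ∀ y ∈ (fun x => x + 1) '' (X ∩ Iio kap.ord), y ≤ kap.ord := by
  rintro y ⟨x, ⟨_, hxk⟩, rfl⟩
  show x + 1 ≤ kap.ord
  rw [Ordinal.add_one_eq_succ, Order.succ_le_iff]
  exact hxk

lemma fillB_le (X : Set Ordinal.{0}) : fillB kap X ≤ kap.ord := by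
  rcases Set.eq_empty_or_nonempty ((fun x => x + 1) '' (X ∩ Iio kap.ord)) with h | h
  · rw [fillB, h, csSup_empty]; exact bot_le
  · exact csSup_le h (fillB_set_bdd X)

lemma lt_kap_of_lt_fillB {X : Set Ordinal.{0}} {y : Ordinal} (h : y < fillB kap X) :
    y < kap.ord := by
  rcases Set.eq_empty_or_nonempty ((fun x => x + 1) '' (X ∩ Iio kap.ord)) with he | hne
  · rw [fillB, he, csSup_empty] at h
    exact absurd h (by simp)
  · obtain ⟨z, hz, hyz⟩ := exists_lt_of_lt_csSup hne h
    obtain ⟨x, ⟨_, hxk⟩, rfl⟩ := hz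
    have hyz' : y < x + 1 := hyz
    have : y ≤ x := by
      rw [Ordinal.add_one_eq_succ, Order.lt_succ_iff] at hyz'; exact hyz'
    exact lt_of_le_of_lt this hxk

lemma lt_fillB_of_mem {X : Set Ordinal.{0}} {x : Ordinal} (hx : x ∈ X) (hxk : x < kap.ord) :
    x < fillB kap X := by
  have h1 : x + 1 ≤ fillB kap X :=
    le_csSup ⟨kap.ord, fun y hy => fillB_set_bdd X y hy⟩ ⟨x, ⟨hx, hxk⟩, rfl⟩
  have : x < x + 1 := by rw [Ordinal.add_one_eq_succ]; exact Order.lt_succ x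
  exact lt_of_lt_of_le this h1

lemma fillB_mono {X Y : Set Ordinal.{0}} (h : X ⊆ Y) : fillB kap X ≤ fillB kap Y := by
  rcases Set.eq_empty_or_nonempty ((fun x => x + 1) '' (X ∩ Iio kap.ord)) with he | hne
  · rw [fillB, he, csSup_empty]; exact bot_le
  · exact csSup_le_csSup ⟨kap.ord, fun y hy => fillB_set_bdd Y y hy⟩ hne
      (Set.image_mono (Set.inter_subset_inter_left _ h))

lemma istep_mono {X Y : Set Ordinal.{0}} (h : X ⊆ Y) : istep F X ⊆ istep F Y := by
  refine Set.iUnion₂_mono fun f hf => Set.image_mono ?_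
  intro x hx i
  exact h (hx i)

lemma subset_stepF (X : Set Ordinal.{0}) : X ⊆ stepF F kap X :=
  fun x hx => Or.inl (Or.inl hx)

lemma stepF_mono {X Y : Set Ordinal.{0}} (h : X ⊆ Y) : stepF F kap X ⊆ stepF F kap Y := by
  apply Set.union_subset_union
  · exact Set.union_subset_union h (istep_mono h)
  · exact Set.Iio_subset_Iio (fillB_mono h)

lemma clN_mono_nat (X : Set Ordinal.{0}) : Monotone (clN F kap X) := by
  apply monotone_nat_of_le_succ
  intro n
  exact subset_stepF _

lemma clN_mono_set {X Y : Set Ordinal.{0}} (h : X ⊆ Y) (n : ℕ) :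
    clN F kap X n ⊆ clN F kap Y n := by
  induction n with
  | zero => exact h
  | succ n ih => exact stepF_mono ih

lemma subset_clF (X : Set Ordinal.{0}) : X ⊆ clF F kap X :=
  fun x hx => Set.mem_iUnion.2 ⟨0, hx⟩

lemma clF_mono {X Y : Set Ordinal.{0}} (h : X ⊆ Y) : clF F kap X ⊆ clF F kap Y := by
  intro x hx
  obtain ⟨n, hn⟩ := Set.mem_iUnion.1 hx
  exact Set.mem_iUnion.2 ⟨n, clN_mono_set h n hn⟩

lemma clN_subset_Iio {lam : Cardinal.{0}} (hFon : FamOn lam F) (hkl : kap ≤ lam)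
    {X : Set Ordinal.{0}} (hX : X ⊆ Iio lam.ord) (n : ℕ) :
    clN F kap X n ⊆ Iio lam.ord := by
  induction n with
  | zero => exact hX
  | succ n ih =>
    rintro y (hy | hy)
    · rcases hy with hy | hy
      · exact ih hy
      · rw [istep, Set.mem_iUnion₂] at hy
        obtain ⟨f, hf, x, hx, rfl⟩ := hy
        exact hFon f hf x fun i => ih (hx i)
    · have h1 : y < kap.ord := lt_kap_of_lt_fillB hy
      exact lt_of_lt_of_le h1 (Cardinal.ord_le_ord.2 hkl)

lemma clF_subset_Iio {lam : Cardinal.{0}} (hFon : FamOn lam F) (hkl : kap ≤ lam)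
    {X : Set Ordinal.{0}} (hX : X ⊆ Iio lam.ord) :
    clF F kap X ⊆ Iio lam.ord := by
  intro x hx
  obtain ⟨n, hn⟩ := Set.mem_iUnion.1 hx
  exact clN_subset_Iio hFon hkl hX n hn

lemma clF_closed {X : Set Ordinal.{0}} {f : FinFun} (hf : f ∈ F)
    (x : Fin f.1 → Ordinal.{0}) (hx : ∀ i, x i ∈ clF F kap X) :
    f.2 x ∈ clF F kap X := by
  have hlev : ∃ n, ∀ i, x i ∈ clN F kap X n := by
    choose g hg using fun i => Set.mem_iUnion.1 (hx i)
    exact ⟨Finset.univ.sup g, fun i =>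
      clN_mono_nat X (Finset.le_sup (Finset.mem_univ i)) (hg i)⟩
  obtain ⟨n, hn⟩ := hlev
  have : f.2 x ∈ istep F (clN F kap X n) :=
    Set.mem_biUnion hf ⟨x, fun i => hn i, rfl⟩
  exact Set.mem_iUnion.2 ⟨n + 1, Or.inl (Or.inr this)⟩

/-- the β for the fill condition -/
def Blev (F : Set FinFun) (kap : Cardinal.{0}) (X : Set Ordinal.{0}) : Ordinal.{0} :=
  ⨆ n : ℕ, fillB kap (clN F kap X n)

lemma Blev_bdd (X : Set Ordinal.{0}) :
    BddAbove (Set.range fun n : ℕ => fillB kap (clN F kap X n)) :=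
  ⟨kap.ord, by rintro y ⟨n, rfl⟩; exact fillB_le _⟩

lemma clF_inter_Iio (X : Set Ordinal.{0}) :
    clF F kap X ∩ Iio kap.ord = Iio (Blev F kap X) := by
  ext y
  constructor
  · rintro ⟨hy, hyk⟩
    obtain ⟨n, hn⟩ := Set.mem_iUnion.1 hy
    have h1 : y < fillB kap (clN F kap X n) := lt_fillB_of_mem hn hyk
    exact lt_of_lt_of_le h1 (le_ciSup (Blev_bdd X) n)
  · intro hy
    obtain ⟨n, hn⟩ := (lt_ciSup_iff (Blev_bdd X)).1 hy
    refine ⟨Set.mem_iUnion.2 ⟨n + 1, Or.inr hn⟩, lt_kap_of_lt_fillB hn⟩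


section Cardinality

lemma mk_setOf_tuple_le (X : Set Ordinal.{0}) (n : ℕ) :
    #({x : Fin n → Ordinal.{0} | ∀ i, x i ∈ X}) ≤ max ℵ₀ #↥X := by
  have hinj : Function.Injective
      (fun p : ↥{x : Fin n → Ordinal.{0} | ∀ i, x i ∈ X} =>
        (fun i => (⟨p.1 i, p.2 i⟩ : ↥X) : Fin n → ↥X)) := by
    intro p q h
    apply Subtype.ext
    funext i
    exact congrArg Subtype.val (congrFun h i)
  calc #({x : Fin n → Ordinal.{0} | ∀ i, x i ∈ X})
      ≤ #(Fin n → ↥X) := Cardinal.mk_le_of_injective hinj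
    _ = (#↥X) ^ (n : Cardinal.{1}) := by
        rw [Cardinal.mk_arrow]
        simp
    _ ≤ max (#↥X) ℵ₀ := Cardinal.power_nat_le_max
    _ = max ℵ₀ #↥X := max_comm _ _

lemma mk_istep_le (hFc : F.Countable) (X : Set Ordinal.{0}) :
    #(istep F X) ≤ max ℵ₀ #↥X := by
  have hF : #↥F ≤ ℵ₀ := Cardinal.mk_le_aleph0_iff.2 (Set.countable_coe_iff.2 hFc)
  have hsup : ⨆ f : ↥F, #((f : FinFun).2 ''
      {x : Fin (f : FinFun).1 → Ordinal.{0} | ∀ i, x i ∈ X}) ≤ max ℵ₀ #↥X :=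
    ciSup_le' fun f => (Cardinal.mk_image_le).trans (mk_setOf_tuple_le X _)
  calc #(istep F X) = #(⋃ f : ↥F, (f : FinFun).2 ''
        {x : Fin (f : FinFun).1 → Ordinal.{0} | ∀ i, x i ∈ X}) := by
        rw [istep, Set.biUnion_eq_iUnion]
    _ ≤ #↥F * ⨆ f : ↥F, #((f : FinFun).2 ''
        {x : Fin (f : FinFun).1 → Ordinal.{0} | ∀ i, x i ∈ X}) := Cardinal.mk_iUnion_le _
    _ ≤ ℵ₀ * max ℵ₀ #↥X := mul_le_mul' hF hsup
    _ ≤ max ℵ₀ #↥X * max ℵ₀ #↥X := mul_le_mul' (le_max_left _ _) le_rfl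
    _ = max ℵ₀ #↥X := Cardinal.mul_eq_self (le_max_left _ _)

lemma fillB_lt_ord (hreg : kap.IsRegular) {X : Set Ordinal.{0}}
    (hX : #↥X < Cardinal.lift.{1} kap) : fillB kap X < kap.ord := by
  apply sSup_lt_ord'
  · rintro y ⟨x, ⟨_, hxk⟩, rfl⟩
    show x + 1 < kap.ord
    rw [Ordinal.add_one_eq_succ]
    exact (Cardinal.isSuccLimit_ord hreg.aleph0_le).succ_lt hxk
  · rw [hreg.cof_eq]
    exact lt_of_le_of_lt ((Cardinal.mk_image_le).trans
      (Cardinal.mk_le_mk_of_subset Set.inter_subset_left)) hX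

lemma aleph0_le_liftk {kap : Cardinal.{0}} (hunc : ℵ₀ < kap) :
    (ℵ₀ : Cardinal.{1}) ≤ Cardinal.lift.{1} kap := by
  rw [← Cardinal.lift_aleph0.{1,0}]
  exact Cardinal.lift_le.2 hunc.le

lemma mk_stepF_lt (hreg : kap.IsRegular) (hunc : ℵ₀ < kap) (hFc : F.Countable)
    {X : Set Ordinal.{0}} (hX : #↥X < Cardinal.lift.{1} kap) :
    #↥(stepF F kap X) < Cardinal.lift.{1} kap := by
  have hK : (ℵ₀ : Cardinal.{1}) ≤ Cardinal.lift.{1} kap := aleph0_le_liftk hunc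
  have h1 : #↥(stepF F kap X) ≤ (#↥X + #↥(istep F X)) +
      #↥(Iio (fillB kap X) : Set Ordinal.{0}) :=
    le_trans (Cardinal.mk_union_le _ _) (add_le_add_left (Cardinal.mk_union_le _ _) _)
  have hK' : (ℵ₀ : Cardinal.{1}) < Cardinal.lift.{1} kap := by
    rw [← Cardinal.lift_aleph0.{1,0}]
    exact Cardinal.lift_lt.2 hunc
  have h2 : #↥(istep F X) < Cardinal.lift.{1} kap :=
    lt_of_le_of_lt (mk_istep_le hFc X) (max_lt hK' hX)
  have h3 : #↥(Iio (fillB kap X) : Set Ordinal.{0}) < Cardinal.lift.{1} kap := by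
    rw [Ordinal.mk_Iio_ordinal]
    exact Cardinal.lift_lt.2 (Cardinal.lt_ord.1 (fillB_lt_ord hreg hX))
  exact lt_of_le_of_lt h1 (Cardinal.add_lt_of_lt hK (Cardinal.add_lt_of_lt hK hX h2) h3)

lemma mk_clN_lt (hreg : kap.IsRegular) (hunc : ℵ₀ < kap) (hFc : F.Countable)
    {X : Set Ordinal.{0}} (hX : #↥X < Cardinal.lift.{1} kap) (n : ℕ) :
    #↥(clN F kap X n) < Cardinal.lift.{1} kap := by
  induction n with
  | zero => exact hX
  | succ n ih => exact mk_stepF_lt hreg hunc hFc ih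

lemma isRegular_lift (hreg : kap.IsRegular) : (Cardinal.lift.{1} kap).IsRegular := by
  constructor
  · rw [← Cardinal.lift_aleph0.{1,0}]
    exact Cardinal.lift_le.2 hreg.aleph0_le
  · rw [← Cardinal.lift_ord, ← Ordinal.lift_cof, hreg.cof_eq]

lemma mk_clF_lt (hreg : kap.IsRegular) (hunc : ℵ₀ < kap) (hFc : F.Countable)
    {X : Set Ordinal.{0}} (hX : #↥X < Cardinal.lift.{1} kap) :
    #↥(clF F kap X) < Cardinal.lift.{1} kap := by
  have hK : (ℵ₀ : Cardinal.{1}) ≤ Cardinal.lift.{1} kap := aleph0_le_liftk hunc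
  have hsup : ⨆ n : ℕ, Cardinal.lift.{0} #↥(clN F kap X n) < Cardinal.lift.{1} kap := by
    apply Cardinal.iSup_lt_lift_of_isRegular (isRegular_lift hreg)
    · rw [Cardinal.mk_nat]
      rw [Cardinal.lift_aleph0]
      rw [← Cardinal.lift_aleph0.{1,0}]
      exact Cardinal.lift_lt.2 hunc
    · intro n
      rw [Cardinal.lift_id']
      exact mk_clN_lt hreg hunc hFc hX n
  calc #↥(clF F kap X) = Cardinal.lift.{0} #↥(clF F kap X) := (Cardinal.lift_id' _).symm
    _ ≤ Cardinal.lift.{1} #ℕ * ⨆ n : ℕ, Cardinal.lift.{0} #↥(clN F kap X n) :=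
        Cardinal.mk_iUnion_le_lift _
    _ < Cardinal.lift.{1} kap := by
        refine Cardinal.mul_lt_of_lt hK ?_ hsup
        rw [Cardinal.mk_nat, Cardinal.lift_aleph0, ← Cardinal.lift_aleph0.{1,0}]
        exact Cardinal.lift_lt.2 hunc

lemma Blev_lt_ord (hreg : kap.IsRegular) (hunc : ℵ₀ < kap) (hFc : F.Countable)
    {X : Set Ordinal.{0}} (hX : #↥X < Cardinal.lift.{1} kap) :
    Blev F kap X < kap.ord := by
  apply Ordinal.iSup_lt_ord
  · rw [hreg.cof_eq, Cardinal.mk_nat]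
    exact hunc
  · exact fun n => fillB_lt_ord hreg (mk_clN_lt hreg hunc hFc hX n)

lemma mk_clF_le_max (hFc : F.Countable) (X : Set Ordinal.{0}) :
    #↥(clF F kap X) ≤ max (max ℵ₀ (Cardinal.lift.{1} kap)) #↥X := by
  set M := max (max ℵ₀ (Cardinal.lift.{1} kap)) #↥X with hM
  have hMa : (ℵ₀ : Cardinal.{1}) ≤ M := le_trans (le_max_left _ _) (le_max_left _ _)
  have hMk : Cardinal.lift.{1} kap ≤ M := le_trans (le_max_right _ _) (le_max_left _ _)
  have hfill : ∀ Y : Set Ordinal.{0}, #↥(Iio (fillB kap Y) : Set Ordinal.{0}) ≤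
      Cardinal.lift.{1} kap := by
    intro Y
    rw [Ordinal.mk_Iio_ordinal]
    refine Cardinal.lift_le.2 ?_
    have := Ordinal.card_le_card (fillB_le (kap := kap) Y)
    rwa [Cardinal.card_ord] at this
  have hstep : ∀ Y : Set Ordinal.{0}, #↥Y ≤ M → #↥(stepF F kap Y) ≤ M := by
    intro Y hY
    refine le_trans (le_trans (Cardinal.mk_union_le _ _)
      (add_le_add_left (Cardinal.mk_union_le _ _) _)) ?_
    refine Cardinal.add_le_of_le hMa (Cardinal.add_le_of_le hMa hY ?_) ((hfill Y).trans hMk)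
    exact (mk_istep_le hFc Y).trans (max_le hMa hY)
  have hN : ∀ n, #↥(clN F kap X n) ≤ M := by
    intro n
    induction n with
    | zero => exact le_max_right _ _
    | succ n ih => exact hstep _ ih
  calc #↥(clF F kap X) = Cardinal.lift.{0} #↥(clF F kap X) := (Cardinal.lift_id' _).symm
    _ ≤ Cardinal.lift.{1} #ℕ * ⨆ n : ℕ, Cardinal.lift.{0} #↥(clN F kap X n) :=
        Cardinal.mk_iUnion_le_lift _
    _ ≤ M * M := by
        refine mul_le_mul' ?_ (ciSup_le' fun n => by rw [Cardinal.lift_id']; exact hN n)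
        simpa using hMa
    _ = M := Cardinal.mul_eq_self hMa

end Cardinality


section Main

lemma clF_mem_clubOf {F : Set FinFun} {kap lam : Cardinal.{0}}
    (hreg : kap.IsRegular) (hunc : ℵ₀ < kap) (hkl : kap ≤ lam)
    (hFc : F.Countable) (hFon : FamOn lam F)
    {X : Set Ordinal.{0}} (hX1 : X ⊆ Iio lam.ord) (hX2 : #↥X < Cardinal.lift.{1} kap) :
    clF F kap X ∈ clubOf lam kap F :=
  ⟨⟨fun x hx => clF_subset_Iio hFon hkl hX1 hx, mk_clF_lt hreg hunc hFc hX2⟩,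
    fun _ hf x hx => clF_closed hf x hx,
    ⟨Blev F kap X, Blev_lt_ord hreg hunc hFc hX2, clF_inter_Iio X⟩⟩

/-- the big closure that every small closure over a set bounded by `y` embeds into -/
def bigW (F : Set FinFun) (kap : Cardinal.{0}) (y : Ordinal.{0}) : Set Ordinal.{0} :=
  clF F kap (Iio y ∪ {y})

lemma exists_escape {F : Set FinFun} {kap lam : Cardinal.{0}}
    (hreg : kap.IsRegular) (hunc : ℵ₀ < kap) (hkl : kap ≤ lam)
    (hFc : F.Countable) {y : Ordinal.{0}} (hy : y < lam.ord) :
    ∃ z, z < lam.ord ∧ z ∉ bigW F kap y := by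
  have hL : (ℵ₀ : Cardinal.{1}) ≤ Cardinal.lift.{1} lam :=
    (aleph0_le_liftk hunc).trans (Cardinal.lift_le.2 hkl)
  have hL' : (ℵ₀ : Cardinal.{1}) < Cardinal.lift.{1} lam := by
    rw [← Cardinal.lift_aleph0.{1,0}]
    exact Cardinal.lift_lt.2 (hunc.trans_le hkl)
  have hXcard : #↥(Iio y ∪ {y} : Set Ordinal.{0}) < Cardinal.lift.{1} lam := by
    refine lt_of_le_of_lt (Cardinal.mk_union_le _ _) ?_
    rw [Ordinal.mk_Iio_ordinal, Cardinal.mk_singleton]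
    exact Cardinal.add_lt_of_lt hL (Cardinal.lift_lt.2 (Cardinal.lt_ord.1 hy))
      (lt_of_lt_of_le Cardinal.one_lt_aleph0 hL)
  have hW : #↥(bigW F kap y) < Cardinal.lift.{1} lam := by
    rcases eq_or_lt_of_le hkl with rfl | hlt
    · exact mk_clF_lt hreg hunc hFc hXcard
    · refine lt_of_le_of_lt (mk_clF_le_max hFc _) (max_lt (max_lt hL' ?_) hXcard)
      exact Cardinal.lift_lt.2 hlt
  by_contra h
  push_neg at h
  have hsub : (Iio lam.ord : Set Ordinal.{0}) ⊆ bigW F kap y := fun z hz => h z hz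
  have hle := Cardinal.mk_le_mk_of_subset hsub
  rw [Ordinal.mk_Iio_ordinal, Cardinal.card_ord] at hle
  exact absurd (lt_of_le_of_lt hle hW) (lt_irrefl _)

/-- the escaping value function -/
def zfun (F : Set FinFun) (kap lam : Cardinal.{0}) (y : Ordinal.{0}) : Ordinal.{0} :=
  Classical.epsilon fun z => z < lam.ord ∧ z ∉ bigW F kap y

/-- the new finitary function that no `F`-closure of a freshly extended set is closed under -/
def gFF (F : Set FinFun) (kap lam : Cardinal.{0}) : FinFun :=
  ⟨1, fun x => zfun F kap lam (x 0)⟩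

end Main

end ClubAux

/-- If `κ` is regular uncountable, `κ ≤ λ` and `cf(λ) ≥ κ`, then every
club of `[λ]^{<κ}` contains an unbounded subset which is not stationary. -/
theorem club_contains_unbounded_nonstationary_of_cof_ge
    (lam kap : Cardinal.{0}) (hreg : kap.IsRegular) (hunc : ℵ₀ < kap)
    (hkl : kap ≤ lam) (hcof : kap ≤ lam.ord.cof) :
    ∀ C, IsClubPK lam kap C →
      ∃ U ⊆ C, IsUnbounded lam kap U ∧ ¬ IsStationaryPK lam kap U := by
  intro C hC
  obtain ⟨F, hFc, hFon, rfl⟩ := hC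
  classical
  set G := insert (ClubAux.gFF F kap lam) F with hG
  have hGc : G.Countable := hFc.insert _
  have h0lam : (0 : Ordinal) < lam.ord :=
    lt_of_lt_of_le (Cardinal.isSuccLimit_ord hreg.aleph0_le).pos (Cardinal.ord_le_ord.2 hkl)
  have hGon : FamOn lam G := by
    intro f hf x hx
    rcases Set.mem_insert_iff.1 hf with rfl | hf'
    · show ClubAux.zfun F kap lam (x ⟨0, Nat.one_pos⟩) < lam.ord
      exact (Classical.epsilon_spec
        (ClubAux.exists_escape hreg hunc hkl hFc (hx ⟨0, Nat.one_pos⟩))).1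
    · exact hFon f hf' x hx
  have hKa : (ℵ₀ : Cardinal.{1}) ≤ Cardinal.lift.{1} kap := ClubAux.aleph0_le_liftk hunc
  refine ⟨clubOf lam kap F \ clubOf lam kap G, Set.diff_subset, ?_, ?_⟩
  · -- unbounded
    rintro b ⟨hb1, hb2⟩
    have hbdd : BddAbove b := ⟨lam.ord, fun x hx => (hb1 x hx).le⟩
    have hsb : sSup b < lam.ord :=
      ClubAux.sSup_lt_ord' hb1 (lt_of_lt_of_le hb2 (Cardinal.lift_le.2 hcof))
    set y := sSup b + 1 with hydef
    have hy : y < lam.ord := by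
      rw [hydef, Ordinal.add_one_eq_succ]
      exact (Cardinal.isSuccLimit_ord (hunc.le.trans hkl)).succ_lt hsb
    have hby : b ⊆ Iio y := by
      intro x hx
      have h1 : x ≤ sSup b := le_csSup hbdd hx
      have h2 : sSup b < y := by rw [hydef, Ordinal.add_one_eq_succ]; exact Order.lt_succ _
      exact lt_of_le_of_lt h1 h2
    set X := b ∪ {y} with hXdef
    have hX1 : X ⊆ Iio lam.ord := by
      rintro x (hx | hx)
      · exact hb1 x hx
      · rw [hx]; exact hy
    have hX2 : #↥X < Cardinal.lift.{1} kap := by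
      refine lt_of_le_of_lt (Cardinal.mk_union_le _ _) ?_
      rw [Cardinal.mk_singleton]
      exact Cardinal.add_lt_of_lt hKa hb2 (lt_of_lt_of_le Cardinal.one_lt_aleph0 hKa)
    set a := ClubAux.clF F kap X with hadef
    have haF : a ∈ clubOf lam kap F :=
      ClubAux.clF_mem_clubOf hreg hunc hkl hFc hFon hX1 hX2
    refine ⟨a, ⟨haF, ?_⟩, Set.subset_union_left.trans (ClubAux.subset_clF X)⟩
    intro haG
    have hyA : y ∈ a := ClubAux.subset_clF X (Set.mem_union_right _ rfl)
    have hz : ClubAux.zfun F kap lam y ∈ a :=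
      haG.2.1 (ClubAux.gFF F kap lam) (Set.mem_insert _ _) (fun _ => y) (fun _ => hyA)
    have hesc : ∃ z, z < lam.ord ∧ z ∉ ClubAux.bigW F kap y :=
      ClubAux.exists_escape hreg hunc hkl hFc hy
    have hzdef : ClubAux.zfun F kap lam y ∉ ClubAux.bigW F kap y :=
      (Classical.epsilon_spec hesc).2
    have hsub : a ⊆ ClubAux.bigW F kap y :=
      ClubAux.clF_mono (Set.union_subset_union hby (subset_refl {y}))
    exact hzdef (hsub hz)
  · -- not stationary
    intro hstat
    obtain ⟨a, ha⟩ := hstat (clubOf lam kap G) ⟨G, hGc, hGon, rfl⟩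
    exact ha.1.2 ha.2
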